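/- Let d ≥ 1, s ∈ (0,1), p ∈ (1,∞), and let u ∈ L^{p−1}_{sp}(ℝ^d). Suppose there exists M > 0 such that for every integer k ≥ 1, ∫_{B_{1/k}(0)} |u(x)|^{p−1} |x|^{−d−sp−2k} dx ≤ (Mk)^{2k}. Then the Carleman condition holds: for every i ∈ {1,…,d}, the series Σ_{k=1}^∞ m_{i,k}^{−1/(2k)} diverges to +∞. -/

import Mathlib

open MeasureTheory Filter Asymptotics Metric Set NNReal ENNReal

noncomputable section

/-- Euclidean space `ℝ^d`. -/
abbrev Ed (d : ℕ) := EuclideanSpace ℝ (Fin d)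

/-- `J_p(t) = |t|^{p-2} t`. -/
def Jp (p t : ℝ) : ℝ := |t| ^ (p - 2) * t

/-- The principal value defining the fractional `p`-Laplacian of `u` at `x` exists and
equals `L`. -/
def fracPLapAt (d : ℕ) (s p : ℝ) (u : Ed d → ℝ) (x : Ed d) (L : ℝ) : Prop :=
  Tendsto (fun δ : ℝ =>
      ∫ y in {y : Ed d | δ < ‖x - y‖}, Jp p (u x - u y) / ‖x - y‖ ^ ((d : ℝ) + s * p))
    (nhdsWithin 0 (Ioi 0)) (nhds L)

/-- Membership in the tail space `L^{p-1}_{sp}(ℝ^d)`. -/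
def memTail (d : ℕ) (s p : ℝ) (u : Ed d → ℝ) : Prop :=
  Measurable u ∧
    Integrable (fun x : Ed d => |u x| ^ (p - 1) / (1 + ‖x‖) ^ ((d : ℝ) + s * p))

/-- The moments `m_{i,k} = ∫ x_i^{2k} |x|^{-4k} |u(x)|^{p-1} |x|^{-d-sp} dx ∈ [0,∞]`. -/
def mik (d : ℕ) (s p : ℝ) (u : Ed d → ℝ) (i : Fin d) (k : ℕ) : ℝ≥0∞ :=
  ∫⁻ x : Ed d, ENNReal.ofReal
    ((x i ^ (2 * k) / ‖x‖ ^ (4 * k)) * (|u x| ^ (p - 1) / ‖x‖ ^ ((d : ℝ) + s * p)))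

/-- The Carleman-type condition: for every `i` the series `∑_{k≥1} m_{i,k}^{-1/(2k)}`
diverges to `+∞` (with conventions `1/0 = ∞`, `1/∞ = 0`). -/
def carleman (d : ℕ) (s p : ℝ) (u : Ed d → ℝ) : Prop :=
  ∀ i : Fin d, ∑' k : ℕ, (mik d s p u i (k + 1) ^ ((1 : ℝ) / (2 * ((k : ℝ) + 1))))⁻¹ = ⊤


lemma coord_le_norm (d : ℕ) (x : EuclideanSpace ℝ (Fin d)) (i : Fin d) : |x i| ≤ ‖x‖ := by
  rw [EuclideanSpace.norm_eq, ← Real.sqrt_sq_eq_abs]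
  apply Real.sqrt_le_sqrt
  have := Finset.single_le_sum (f := fun j => ‖x j‖ ^ 2) (fun j _ => by positivity)
    (Finset.mem_univ i)
  simpa [Real.norm_eq_abs, sq_abs] using this

-- pointwise "inside" bound
lemma inside_bound (d : ℕ) (s p : ℝ) (hsp : 0 < (d : ℝ) + s * p)
    (x : EuclideanSpace ℝ (Fin d)) (i : Fin d) (a : ℝ) (ha : 0 ≤ a) (k : ℕ) (hk : 1 ≤ k) :
    (x i ^ (2 * k) / ‖x‖ ^ (4 * k)) * (a / ‖x‖ ^ ((d : ℝ) + s * p))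
      ≤ a / ‖x‖ ^ ((d : ℝ) + s * p + 2 * k) := by
  rcases eq_or_lt_of_le (norm_nonneg x) with h0 | h0
  · have hx0 : x = 0 := by simpa using h0.symm
    subst hx0
    simp [zero_pow (by omega : 2 * k ≠ 0), Real.zero_rpow (by positivity : (d:ℝ) + s * p + 2*k ≠ 0)]
  · set n := ‖x‖ with hn
    have hA : x i ^ (2 * k) ≤ n ^ (2 * k) := by
      rw [pow_mul, pow_mul]
      refine pow_le_pow_left₀ (sq_nonneg _) ?_ k
      have h := coord_le_norm d x i
      nlinarith [abs_nonneg (x i), sq_abs (x i)]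
    have hfac : x i ^ (2 * k) / n ^ (4 * k) ≤ 1 / n ^ (2 * k) := by
      rw [show 4 * k = 2 * k + 2 * k by ring, pow_add,
        div_le_div_iff₀ (by positivity) (by positivity)]
      nlinarith [pow_pos h0 (2 * k), pow_nonneg (le_of_lt h0) (2*k)]
    have hsplit : n ^ ((d : ℝ) + s * p + 2 * k) = n ^ ((d : ℝ) + s * p) * n ^ (2 * k) := by
      rw [Real.rpow_add h0]
      congr 1
      rw [← Real.rpow_natCast n (2*k)]
      push_cast
      ring_nf
    calc (x i ^ (2 * k) / n ^ (4 * k)) * (a / n ^ ((d : ℝ) + s * p))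
        ≤ (1 / n ^ (2 * k)) * (a / n ^ ((d : ℝ) + s * p)) := by
          apply mul_le_mul_of_nonneg_right hfac (by positivity)
      _ = a / (n ^ ((d : ℝ) + s * p) * n ^ (2 * k)) := by
          rw [one_div_mul_eq_div, div_div]
      _ = a / n ^ ((d : ℝ) + s * p + 2 * k) := by rw [hsplit]

-- pointwise "outside" bound
lemma outside_bound (d : ℕ) (s p : ℝ) (hsp : 0 < (d : ℝ) + s * p)
    (x : EuclideanSpace ℝ (Fin d)) (i : Fin d) (a : ℝ) (ha : 0 ≤ a) (k : ℕ) (hk : 1 ≤ k)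
    (hx : 1 / (k : ℝ) ≤ ‖x‖) :
    (x i ^ (2 * k) / ‖x‖ ^ (4 * k)) * (a / ‖x‖ ^ ((d : ℝ) + s * p))
      ≤ ((k : ℝ) ^ (2 * k) * ((k : ℝ) + 1) ^ ((d : ℝ) + s * p))
          * (a / (1 + ‖x‖) ^ ((d : ℝ) + s * p)) := by
  have hkpos : (0 : ℝ) < k := by exact_mod_cast hk
  have h0 : (0 : ℝ) < ‖x‖ := lt_of_lt_of_le (by positivity) hx
  set n := ‖x‖ with hn
  have hkn : 1 ≤ (k : ℝ) * n := by
    rw [div_le_iff₀ hkpos] at hx; linarith [hx]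
  have hA : x i ^ (2 * k) ≤ n ^ (2 * k) := by
    rw [pow_mul, pow_mul]
    refine pow_le_pow_left₀ (sq_nonneg _) ?_ k
    have h := coord_le_norm d x i
    nlinarith [abs_nonneg (x i), sq_abs (x i)]
  have hfac1 : x i ^ (2 * k) / n ^ (4 * k) ≤ (k : ℝ) ^ (2 * k) := by
    rw [show 4 * k = 2 * k + 2 * k by ring, pow_add, div_le_iff₀ (by positivity)]
    have h1 : (1:ℝ) ≤ ((k:ℝ) * n) ^ (2 * k) := one_le_pow₀ hkn
    calc x i ^ (2*k) ≤ n ^ (2*k) := hA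
      _ = 1 * n ^ (2*k) := by ring
      _ ≤ ((k:ℝ) * n) ^ (2*k) * n ^ (2*k) := by
          apply mul_le_mul_of_nonneg_right h1 (by positivity)
      _ = (k:ℝ)^(2*k) * (n^(2*k) * n^(2*k)) := by rw [mul_pow]; ring
  have hfac2 : a / n ^ ((d : ℝ) + s * p)
      ≤ ((k : ℝ) + 1) ^ ((d : ℝ) + s * p) * (a / (1 + n) ^ ((d : ℝ) + s * p)) := by
    have h1n : 1 + n ≤ ((k : ℝ) + 1) * n := by nlinarith
    have h2 : (1 + n) ^ ((d : ℝ) + s * p)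
        ≤ ((k : ℝ) + 1) ^ ((d : ℝ) + s * p) * n ^ ((d : ℝ) + s * p) := by
      rw [← Real.mul_rpow (by positivity) (by positivity)]
      exact Real.rpow_le_rpow (by positivity) h1n (le_of_lt hsp)
    rw [mul_div_assoc', div_le_div_iff₀ (by positivity) (by positivity)]
    calc a * (1 + n) ^ ((d:ℝ) + s*p)
        ≤ a * (((k:ℝ)+1) ^ ((d:ℝ)+s*p) * n ^ ((d:ℝ)+s*p)) :=
          mul_le_mul_of_nonneg_left h2 ha
      _ = ((k:ℝ)+1) ^ ((d:ℝ)+s*p) * a * n ^ ((d:ℝ)+s*p) := by ring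
  calc (x i ^ (2 * k) / n ^ (4 * k)) * (a / n ^ ((d : ℝ) + s * p))
      ≤ (k : ℝ) ^ (2 * k) * (((k : ℝ) + 1) ^ ((d : ℝ) + s * p) * (a / (1 + n) ^ ((d : ℝ) + s * p))) := by
        apply mul_le_mul hfac1 hfac2 (by positivity) (by positivity)
    _ = ((k : ℝ) ^ (2 * k) * ((k : ℝ) + 1) ^ ((d : ℝ) + s * p)) * (a / (1 + n) ^ ((d : ℝ) + s * p)) := by
        ring


lemma real_key (M B Ar E : ℝ) (hM : 0 < M) (hAr : 0 ≤ Ar) (hE : 0 < E)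
    (hB : B = 2 ^ E * (Ar + 1)) (k : ℕ) (hk : 1 ≤ k) :
    (M * k) ^ (2 * k) + (k : ℝ) ^ (2 * k) * ((k : ℝ) + 1) ^ E * Ar
      ≤ (2 * (M + B) * k) ^ (2 * k) := by
  have hkR : (1 : ℝ) ≤ (k : ℝ) := by exact_mod_cast hk
  have h2E : (1 : ℝ) ≤ 2 ^ E := Real.one_le_rpow (by norm_num) (le_of_lt hE)
  have hBpos : (0 : ℝ) < B := by rw [hB]; positivity
  -- (k+1)^E ≤ (2^E)^(2k)
  have hk2 : (k : ℝ) + 1 ≤ (2 : ℝ) ^ k := by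
    have := Nat.lt_two_pow_self (n := k)
    have : (k : ℝ) + 1 ≤ ((2 ^ k : ℕ) : ℝ) := by exact_mod_cast this
    simpa using this
  have h3 : ((k : ℝ) + 1) ^ E ≤ ((2 : ℝ) ^ E) ^ (2 * k) := by
    calc ((k : ℝ) + 1) ^ E ≤ ((2 : ℝ) ^ k) ^ E :=
          Real.rpow_le_rpow (by positivity) hk2 (le_of_lt hE)
      _ = ((2 : ℝ) ^ E) ^ k := by
          rw [← Real.rpow_natCast 2 k, ← Real.rpow_mul (by norm_num), mul_comm,
            Real.rpow_mul (by norm_num), Real.rpow_natCast]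
      _ ≤ ((2 : ℝ) ^ E) ^ (2 * k) := pow_le_pow_right₀ h2E (by omega)
  have h4 : Ar ≤ (Ar + 1) ^ (2 * k) :=
    le_trans (by linarith) (le_self_pow₀ (by linarith) (by omega))
  have h5 : (k : ℝ) ^ (2 * k) * ((k : ℝ) + 1) ^ E * Ar ≤ (B * k) ^ (2 * k) := by
    calc (k : ℝ) ^ (2 * k) * ((k : ℝ) + 1) ^ E * Ar
        ≤ (k : ℝ) ^ (2 * k) * (((2:ℝ) ^ E) ^ (2 * k)) * ((Ar + 1) ^ (2 * k)) := by
          apply mul_le_mul (mul_le_mul_of_nonneg_left h3 (by positivity)) h4 hAr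
          positivity
      _ = (B * k) ^ (2 * k) := by rw [hB, mul_pow, mul_pow]; ring
  have h6 : (M * k) ^ (2 * k) ≤ ((M + B) * k) ^ (2 * k) :=
    pow_le_pow_left₀ (by positivity) (by nlinarith) _
  have h7 : (B * k) ^ (2 * k) ≤ ((M + B) * k) ^ (2 * k) :=
    pow_le_pow_left₀ (by positivity) (by nlinarith) _
  have h8 : (2 : ℝ) ≤ 2 ^ (2 * k) := by
    calc (2:ℝ) = 2 ^ 1 := (pow_one 2).symm
      _ ≤ 2 ^ (2 * k) := pow_le_pow_right₀ (by norm_num) (by omega)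
  calc (M * k) ^ (2 * k) + (k : ℝ) ^ (2 * k) * ((k : ℝ) + 1) ^ E * Ar
      ≤ ((M + B) * k) ^ (2 * k) + ((M + B) * k) ^ (2 * k) := by
        have := le_trans h5 h7; linarith
    _ = 2 * ((M + B) * k) ^ (2 * k) := by ring
    _ ≤ 2 ^ (2 * k) * ((M + B) * k) ^ (2 * k) := by
        apply mul_le_mul_of_nonneg_right h8 (by positivity)
    _ = (2 * (M + B) * k) ^ (2 * k) := by rw [show 2*(M+B)*(k:ℝ) = 2*((M+B)*k) by ring, mul_pow 2]

/-- a sufficient condition for the Carleman condition. If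
`∫_{B_{1/k}(0)} |u(x)|^{p-1} |x|^{-d-sp-2k} dx ≤ (Mk)^{2k}` for all `k ≥ 1` and some
`M > 0`, then the Carleman condition holds. -/
theorem sufficient_condition_for_carleman
    (d : ℕ) (hd : 1 ≤ d) (s p : ℝ) (hs : s ∈ Ioo (0 : ℝ) 1) (hp : 1 < p)
    (u : Ed d → ℝ) (hu : memTail d s p u)
    (M : ℝ) (hM : 0 < M)
    (hbound : ∀ k : ℕ, 1 ≤ k →
      (∫⁻ x in ball (0 : Ed d) (1 / k),
          ENNReal.ofReal (|u x| ^ (p - 1) / ‖x‖ ^ ((d : ℝ) + s * p + 2 * k)))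
        ≤ ENNReal.ofReal ((M * k) ^ (2 * k))) :
    carleman d s p u := by
  simp only [memTail] at hu
  simp only [carleman]
  obtain ⟨hmeas, hint⟩ := hu
  have hd1 : (1 : ℝ) ≤ (d : ℝ) := by exact_mod_cast hd
  have hsp : 0 < (d : ℝ) + s * p := by nlinarith [hs.1, hp]
  intro i
  set A := ∫⁻ x : Ed d, ENNReal.ofReal (|u x| ^ (p - 1) / (1 + ‖x‖) ^ ((d : ℝ) + s * p))
    with hAdef
  have hAtop : A ≠ ⊤ := hint.lintegral_lt_top.ne
  set Ar := A.toReal with hArdef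
  have hAr : 0 ≤ Ar := ENNReal.toReal_nonneg
  have hAeq : A = ENNReal.ofReal Ar := (ENNReal.ofReal_toReal hAtop).symm
  set B := 2 ^ ((d : ℝ) + s * p) * (Ar + 1) with hB
  have hBpos : 0 < B := by positivity
  set C := 2 * (M + B) with hC
  have hCpos : 0 < C := by positivity
  -- moment bound
  have hmom : ∀ k : ℕ, 1 ≤ k → mik d s p u i k ≤ ENNReal.ofReal ((C * k) ^ (2 * k)) := by
    intro k hk
    have hkpos : (0 : ℝ) < (k : ℝ) := by exact_mod_cast hk
    have hball : MeasurableSet (ball (0 : Ed d) (1 / (k : ℝ))) := measurableSet_ball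
    set c : ℝ := (k : ℝ) ^ (2 * k) * ((k : ℝ) + 1) ^ ((d : ℝ) + s * p) with hc
    have hcpos : 0 < c := by positivity
    have hsplit : mik d s p u i k =
        (∫⁻ x in ball (0 : Ed d) (1 / (k : ℝ)), ENNReal.ofReal
          ((x i ^ (2 * k) / ‖x‖ ^ (4 * k)) * (|u x| ^ (p - 1) / ‖x‖ ^ ((d : ℝ) + s * p)))) +
        (∫⁻ x in (ball (0 : Ed d) (1 / (k : ℝ)))ᶜ, ENNReal.ofReal
          ((x i ^ (2 * k) / ‖x‖ ^ (4 * k)) * (|u x| ^ (p - 1) / ‖x‖ ^ ((d : ℝ) + s * p)))) :=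
      (lintegral_add_compl _ hball).symm
    have hT1 : (∫⁻ x in ball (0 : Ed d) (1 / (k : ℝ)), ENNReal.ofReal
          ((x i ^ (2 * k) / ‖x‖ ^ (4 * k)) * (|u x| ^ (p - 1) / ‖x‖ ^ ((d : ℝ) + s * p))))
        ≤ ENNReal.ofReal ((M * k) ^ (2 * k)) := by
      refine le_trans (setLIntegral_mono' hball fun x _ => ?_) (hbound k hk)
      exact ENNReal.ofReal_le_ofReal
        (inside_bound d s p hsp x i _ (by positivity) k hk)
    have hT2 : (∫⁻ x in (ball (0 : Ed d) (1 / (k : ℝ)))ᶜ, ENNReal.ofReal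
          ((x i ^ (2 * k) / ‖x‖ ^ (4 * k)) * (|u x| ^ (p - 1) / ‖x‖ ^ ((d : ℝ) + s * p))))
        ≤ ENNReal.ofReal c * A := by
      have step1 : (∫⁻ x in (ball (0 : Ed d) (1 / (k : ℝ)))ᶜ, ENNReal.ofReal
            ((x i ^ (2 * k) / ‖x‖ ^ (4 * k)) * (|u x| ^ (p - 1) / ‖x‖ ^ ((d : ℝ) + s * p))))
          ≤ ∫⁻ x in (ball (0 : Ed d) (1 / (k : ℝ)))ᶜ, ENNReal.ofReal c *
              ENNReal.ofReal (|u x| ^ (p - 1) / (1 + ‖x‖) ^ ((d : ℝ) + s * p)) := by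
        refine setLIntegral_mono' hball.compl fun x hx => ?_
        have hxk : 1 / (k : ℝ) ≤ ‖x‖ := by
          simp only [mem_compl_iff, mem_ball, dist_zero_right, not_lt] at hx
          exact hx
        rw [← ENNReal.ofReal_mul (le_of_lt hcpos)]
        exact ENNReal.ofReal_le_ofReal
          (outside_bound d s p hsp x i _ (by positivity) k hk hxk)
      rw [lintegral_const_mul' _ _ ENNReal.ofReal_ne_top] at step1
      exact le_trans step1 (mul_le_mul_right (setLIntegral_le_lintegral _ _) _)
    calc mik d s p u i k ≤ ENNReal.ofReal ((M * k) ^ (2 * k)) + ENNReal.ofReal c * A := by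
          rw [hsplit]; exact add_le_add hT1 hT2
      _ = ENNReal.ofReal ((M * k) ^ (2 * k) + c * Ar) := by
          rw [hAeq, ← ENNReal.ofReal_mul (le_of_lt hcpos),
            ← ENNReal.ofReal_add (by positivity) (by positivity)]
      _ ≤ ENNReal.ofReal ((C * k) ^ (2 * k)) := by
          apply ENNReal.ofReal_le_ofReal
          rw [hC, hc]
          exact real_key M B Ar ((d : ℝ) + s * p) hM hAr hsp hB k hk
  -- per-term bound
  have hterm : ∀ k : ℕ, (ENNReal.ofReal (C * ((k : ℝ) + 1)))⁻¹
      ≤ (mik d s p u i (k + 1) ^ ((1 : ℝ) / (2 * ((k : ℝ) + 1))))⁻¹ := by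
    intro k
    rw [ENNReal.inv_le_inv]
    have hk1 : (0 : ℝ) < (k : ℝ) + 1 := by positivity
    calc mik d s p u i (k + 1) ^ ((1 : ℝ) / (2 * ((k : ℝ) + 1)))
        ≤ (ENNReal.ofReal ((C * ((k : ℕ) + 1 : ℕ)) ^ (2 * (k + 1)))) ^
            ((1 : ℝ) / (2 * ((k : ℝ) + 1))) := by
          apply ENNReal.rpow_le_rpow (hmom (k + 1) (by omega)) (by positivity)
      _ = ENNReal.ofReal (((C * ((k : ℕ) + 1 : ℕ)) ^ (2 * (k + 1) : ℕ)) ^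
            ((1 : ℝ) / (2 * ((k : ℝ) + 1)))) := by
          rw [ENNReal.ofReal_rpow_of_pos (by positivity)]
      _ = ENNReal.ofReal (C * ((k : ℝ) + 1)) := by
          congr 1
          have hcast : ((2 * (k + 1) : ℕ) : ℝ) = 2 * ((k : ℝ) + 1) := by push_cast; ring
          rw [← Real.rpow_natCast (C * ((k : ℕ) + 1 : ℕ)) (2 * (k + 1)), hcast,
            ← Real.rpow_mul (by positivity),
            mul_one_div_cancel (by positivity : (2 : ℝ) * ((k : ℝ) + 1) ≠ 0),
            Real.rpow_one]
          push_cast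
          ring
  -- divergence of the lower series
  have hdiv : ∑' k : ℕ, (ENNReal.ofReal (C * ((k : ℝ) + 1)))⁻¹ = ⊤ := by
    by_contra h
    have hrw : ∀ k : ℕ, (ENNReal.ofReal (C * ((k : ℝ) + 1)))⁻¹
        = (((C * ((k : ℝ) + 1))⁻¹).toNNReal : ℝ≥0∞) := by
      intro k
      rw [← ENNReal.ofReal_inv_of_pos (by positivity)]
      rfl
    rw [funext hrw] at h
    have hsummable := ENNReal.tsum_coe_ne_top_iff_summable.mp h
    have hreal : Summable (fun k : ℕ => (C * ((k : ℝ) + 1))⁻¹) := by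
      have := NNReal.summable_coe.mpr hsummable
      convert this using 2 with k
      rw [Real.coe_toNNReal _ (by positivity)]
    have h2 : Summable (fun k : ℕ => ((k : ℝ) + 1)⁻¹) := by
      have := hreal.mul_left C
      convert this using 2 with k
      · rfl
      field_simp
    have h3 : Summable (fun n : ℕ => ((n : ℝ))⁻¹) := by
      rw [← _root_.summable_nat_add_iff 1]
      convert h2 using 2 with k
      · rfl
      push_cast
      ring
    exact Real.not_summable_natCast_inv h3
  rw [eq_top_iff, ← hdiv]
  exact ENNReal.tsum_le_tsum hterm
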